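/- Let G be a finite simple graph of order n ≥ 1 and let r ≥ 1 be an integer. The corona G ∘ \overline{K_r} (obtained from G by attaching r new pendant leaves to each vertex of G) has exactly 2^{n-1} domatic partitions with 2 parts and no domatic partition with 3 or more parts; equivalently DP(G ∘ \overline{K_r}, x) = x + 2^{n-1}x². -/

import Mathlib

/-- `S` is a dominating set of `G`: every vertex outside `S` has a neighbor in `S`. -/
def IsDominating {V : Type*} (G : SimpleGraph V) (S : Set V) : Prop :=
  ∀ v, v ∉ S → ∃ u ∈ S, G.Adj v u

/-- A domatic partition of `G`: a partition of the vertex set into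
(pairwise disjoint, nonempty) dominating sets. -/
def IsDomaticPartition {V : Type*} (G : SimpleGraph V) (P : Set (Set V)) : Prop :=
  Setoid.IsPartition P ∧ ∀ S ∈ P, IsDominating G S

/-- `dp G i` is the number of domatic partitions of `G` with exactly `i` parts. -/
noncomputable def dp {V : Type*} (G : SimpleGraph V) (i : ℕ) : ℕ :=
  {P : Set (Set V) | IsDomaticPartition G P ∧ P.ncard = i}.ncard

/-- The corona `G ∘ K̄ᵣ`: attach `r` new pendant leaves `Sum.inr (v, j)`,
`j : Fin r`, to each vertex `Sum.inl v` of `G`. -/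
def corona {V : Type*} (G : SimpleGraph V) (r : ℕ) : SimpleGraph (V ⊕ V × Fin r) where
  Adj a b :=
    match a, b with
    | Sum.inl u, Sum.inl v => G.Adj u v
    | Sum.inl u, Sum.inr (v, _) => u = v
    | Sum.inr (u, _), Sum.inl v => u = v
    | Sum.inr _, Sum.inr _ => False
  symm := ⟨by
    rintro (u | ⟨u, i⟩) (v | ⟨v, j⟩) h <;> simp_all [SimpleGraph.adj_comm]⟩
  loopless := ⟨by
    rintro (u | ⟨u, i⟩) h <;> simp_all⟩

open Classical

section Aux

variable {V : Type*} {G : SimpleGraph V} {r : ℕ}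

/-- The "side" set determined by `f : V → Bool`: centers `v` with `f v = true`
together with leaves of centers `v` with `f v = false`. -/
def coronaSide (r : ℕ) (f : V → Bool) : Set (V ⊕ V × Fin r) :=
  Sum.elim (fun v => f v = true) (fun p => f p.1 = false)

lemma mem_coronaSide_inl {f : V → Bool} {v : V} :
    Sum.inl v ∈ coronaSide r f ↔ f v = true := Iff.rfl

lemma mem_coronaSide_inr {f : V → Bool} {v : V} {j : Fin r} :
    Sum.inr (v, j) ∈ coronaSide r f ↔ f v = false := Iff.rfl

lemma coronaSide_compl (f : V → Bool) :
    (coronaSide r f)ᶜ = coronaSide r (fun v => !f v) := by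
  ext (v | ⟨v, j⟩)
  · show ¬(f v = true) ↔ (!f v) = true
    simp
  · show ¬(f v = false) ↔ (!f v) = false
    simp

lemma corona_adj_inr {v : V} {j : Fin r} {u : V ⊕ V × Fin r}
    (h : (corona G r).Adj (Sum.inr (v, j)) u) : u = Sum.inl v := by
  rcases u with u | ⟨u, k⟩
  · have h' : v = u := h
    exact congrArg Sum.inl h'.symm
  · exact (h : False).elim

lemma coronaSide_dominating (hr : 1 ≤ r) (f : V → Bool) :
    IsDominating (corona G r) (coronaSide r f) := by
  rintro (v | ⟨v, j⟩) hx
  · refine ⟨Sum.inr (v, ⟨0, hr⟩), ?_, rfl⟩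
    have hv : f v = false := by
      simpa [mem_coronaSide_inl] using hx
    exact hv
  · refine ⟨Sum.inl v, ?_, rfl⟩
    have hv : f v = true := by
      have := hx
      simp only [mem_coronaSide_inr] at this
      simpa using this
    exact hv

lemma coronaSide_nonempty (hr : 1 ≤ r) [Nonempty V] (f : V → Bool) :
    (coronaSide (V := V) r f).Nonempty := by
  obtain ⟨v⟩ := ‹Nonempty V›
  cases hfv : f v
  · exact ⟨Sum.inr (v, ⟨0, hr⟩), hfv⟩
  · exact ⟨Sum.inl v, hfv⟩

lemma pair_isPartition {α : Type*} {A : Set α} (h1 : A.Nonempty) (h2 : Aᶜ.Nonempty) :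
    Setoid.IsPartition ({A, Aᶜ} : Set (Set α)) := by
  constructor
  · rintro (h | h)
    · exact h1.ne_empty h.symm
    · exact h2.ne_empty h.symm
  · intro x
    by_cases hx : x ∈ A
    · refine ⟨A, ⟨Or.inl rfl, hx⟩, ?_⟩
      rintro S ⟨(rfl | rfl), hS⟩
      · rfl
      · exact absurd hx hS
    · refine ⟨Aᶜ, ⟨Or.inr rfl, hx⟩, ?_⟩
      rintro S ⟨(rfl | rfl), hS⟩
      · exact absurd hS hx
      · rfl

lemma phi_isDomatic (hr : 1 ≤ r) [Nonempty V] (f : V → Bool) :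
    IsDomaticPartition (corona G r) {coronaSide r f, (coronaSide r f)ᶜ} ∧
      ({coronaSide r f, (coronaSide r f)ᶜ} : Set (Set (V ⊕ V × Fin r))).ncard = 2 := by
  have hne : (coronaSide (V := V) r f).Nonempty := coronaSide_nonempty hr f
  have hnec : (coronaSide (V := V) r f)ᶜ.Nonempty := by
    rw [coronaSide_compl]; exact coronaSide_nonempty hr _
  refine ⟨⟨pair_isPartition hne hnec, ?_⟩, ?_⟩
  · rintro S (rfl | rfl)
    · exact coronaSide_dominating hr f
    · rw [coronaSide_compl]
      exact coronaSide_dominating hr _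
  · refine Set.ncard_pair ?_
    intro h
    obtain ⟨x, hx⟩ := hne
    exact (h ▸ hx : x ∈ (coronaSide (V := V) r f)ᶜ) hx

lemma mem_inr_iff_of_domatic {A : Set (V ⊕ V × Fin r)}
    (h : IsDomaticPartition (corona G r) {A, Aᶜ}) (v : V) (j : Fin r) :
    Sum.inr (v, j) ∈ A ↔ Sum.inl v ∉ A := by
  constructor
  · intro hmem hv
    have hdom : IsDominating (corona G r) Aᶜ := h.2 Aᶜ (Or.inr rfl)
    obtain ⟨u, huA, hadj⟩ := hdom (Sum.inr (v, j)) (by simpa using hmem)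
    have hu := corona_adj_inr hadj
    exact (hu ▸ huA) hv
  · intro hv
    by_contra hmem
    have hdom : IsDominating (corona G r) A := h.2 A (Or.inl rfl)
    obtain ⟨u, huA, hadj⟩ := hdom (Sum.inr (v, j)) hmem
    have hu := corona_adj_inr hadj
    exact hv (hu ▸ huA)

lemma exists_compl_of_ncard_two {α : Type*} {P : Set (Set α)}
    (hpart : Setoid.IsPartition P) (h2 : P.ncard = 2) (a : α) :
    ∃ A, a ∈ A ∧ P = {A, Aᶜ} := by
  obtain ⟨S, T, hST, rfl⟩ := Set.ncard_eq_two.mp h2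
  have hTc : T = Sᶜ := by
    ext x
    obtain ⟨B, ⟨hBP, hxB⟩, huniq⟩ := hpart.2 x
    constructor
    · intro hxT hxS
      have e1 := huniq S ⟨Or.inl rfl, hxS⟩
      have e2 := huniq T ⟨Or.inr rfl, hxT⟩
      exact hST (e1.trans e2.symm)
    · intro hxS
      rcases hBP with rfl | rfl
      · exact absurd hxB hxS
      · exact hxB
  subst hTc
  obtain ⟨B, ⟨hBP, haB⟩, _⟩ := hpart.2 a
  rcases hBP with rfl | rfl
  · exact ⟨B, haB, rfl⟩
  · exact ⟨Sᶜ, haB, by rw [compl_compl, Set.pair_comm]⟩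

end Aux

/-- For a finite graph `G` of order `n ≥ 1` and `r ≥ 1`, the corona `G ∘ K̄ᵣ`
has exactly `2^(n-1)` domatic partitions with two parts and no domatic
partition with three or more parts; equivalently
`DP(G ∘ K̄ᵣ, x) = x + 2^(n-1) x²`. -/
theorem dp_corona (V : Type*) [Fintype V] (G : SimpleGraph V) (r : ℕ) (hr : 1 ≤ r)
    (hn : 1 ≤ Fintype.card V) :
    dp (corona G r) 2 = 2 ^ (Fintype.card V - 1) ∧
      ∀ P : Set (Set (V ⊕ V × Fin r)),
        IsDomaticPartition (corona G r) P → P.ncard ≤ 2 := by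
  classical
  have hne : Nonempty V := Fintype.card_pos_iff.mp hn
  obtain ⟨v₀⟩ := id hne
  constructor
  · -- count of two-part domatic partitions
    have hset : {P : Set (Set (V ⊕ V × Fin r)) | IsDomaticPartition (corona G r) P ∧ P.ncard = 2}
        = (fun f => ({coronaSide r f, (coronaSide r f)ᶜ} : Set (Set (V ⊕ V × Fin r)))) ''
          {f : V → Bool | f v₀ = true} := by
      ext P
      constructor
      · rintro ⟨hdom, h2⟩
        obtain ⟨A, hv₀A, rfl⟩ := exists_compl_of_ncard_two hdom.1 h2 (Sum.inl v₀)
        refine ⟨fun v => decide (Sum.inl v ∈ A), by simpa using hv₀A, ?_⟩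
        have hA : coronaSide r (fun v => decide (Sum.inl v ∈ A)) = A := by
          ext (v | ⟨v, j⟩)
          · simp [mem_coronaSide_inl]
          · rw [mem_coronaSide_inr, mem_inr_iff_of_domatic hdom v j]
            simp
        simp only [hA]
      · rintro ⟨f, -, rfl⟩
        exact phi_isDomatic hr f
    have hinj : Set.InjOn
        (fun f => ({coronaSide r f, (coronaSide r f)ᶜ} : Set (Set (V ⊕ V × Fin r))))
        {f : V → Bool | f v₀ = true} := by
      intro f hf g hg h
      have hmemAf : ({coronaSide r f, (coronaSide r f)ᶜ} :
          Set (Set (V ⊕ V × Fin r))) = {coronaSide r g, (coronaSide r g)ᶜ} := h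
      have hAf : coronaSide r f = coronaSide r g ∨
          coronaSide r f = (coronaSide r g)ᶜ := by
        have : coronaSide (V := V) r f ∈
            ({coronaSide r g, (coronaSide r g)ᶜ} : Set (Set (V ⊕ V × Fin r))) := by
          rw [← hmemAf]; exact Or.inl rfl
        exact this
      have heq : coronaSide (V := V) r f = coronaSide r g := by
        rcases hAf with h' | h'
        · exact h'
        · exfalso
          have h1 : Sum.inl v₀ ∈ coronaSide (V := V) r f := hf
          have h2 : Sum.inl v₀ ∈ coronaSide (V := V) r g := hg
          rw [h'] at h1
          exact h1 h2
      funext v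
      have hv : (Sum.inl v ∈ coronaSide (V := V) r f) ↔ Sum.inl v ∈ coronaSide r g := by
        rw [heq]
      rw [mem_coronaSide_inl, mem_coronaSide_inl] at hv
      cases hfv : f v <;> cases hgv : g v <;> simp_all
    have hcardT : ({f : V → Bool | f v₀ = true} : Set (V → Bool)).ncard
        = 2 ^ (Fintype.card V - 1) := by
      rw [← Nat.card_coe_set_eq]
      have e : ↥({f : V → Bool | f v₀ = true} : Set (V → Bool)) ≃
          ({v : V // v ≠ v₀} → Bool) :=
        { toFun := fun fp w => fp.1 w.1
          invFun := fun g => ⟨fun v => if h : v = v₀ then true else g ⟨v, h⟩, by simp⟩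
          left_inv := by
            rintro ⟨f, hf⟩
            apply Subtype.ext
            funext v
            by_cases h : v = v₀
            · subst h
              simpa using (hf : f v = true).symm
            · simp [h]
          right_inv := by
            intro g
            funext w
            simp [w.2] }
      rw [Nat.card_congr e, Nat.card_eq_fintype_card, Fintype.card_fun]
      congr 1
      simp [Fintype.card_subtype_eq]
    rw [dp, hset, Set.ncard_image_of_injOn hinj, hcardT]
  · -- no domatic partition has more than two parts
    intro P hP
    obtain ⟨S₀, ⟨hS₀P, hv₀⟩, huniq₀⟩ := hP.1.2 (Sum.inl v₀)
    obtain ⟨S₁, ⟨hS₁P, hw⟩, huniq₁⟩ := hP.1.2 (Sum.inr (v₀, ⟨0, hr⟩))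
    have hsub : P ⊆ {S₀, S₁} := by
      intro S hS
      by_cases hc : Sum.inl v₀ ∈ S
      · exact Or.inl (huniq₀ S ⟨hS, hc⟩)
      · by_cases hl : Sum.inr (v₀, (⟨0, hr⟩ : Fin r)) ∈ S
        · exact Or.inr (huniq₁ S ⟨hS, hl⟩)
        · exfalso
          obtain ⟨u, huS, hadj⟩ := hP.2 S hS (Sum.inr (v₀, ⟨0, hr⟩)) hl
          have hu := corona_adj_inr hadj
          exact hc (hu ▸ huS)
    calc P.ncard ≤ ({S₀, S₁} : Set (Set (V ⊕ V × Fin r))).ncard :=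
          Set.ncard_le_ncard hsub ((Set.finite_singleton _).insert _)
      _ ≤ ({S₁} : Set (Set (V ⊕ V × Fin r))).ncard + 1 := Set.ncard_insert_le _ _
      _ ≤ 2 := by simp
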